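/- Let v be monotone submodular on finite N with v(∅)=0. In the pricing game with decision map X satisfying X(p) ∈ argmax_S (v(S)-p(S)), every pure Nash equilibrium price vector p satisfies p_i ≥ v(N) - v(N\{i}) for every seller i. -/

import Mathlib

/-- For monotone submodular `v` with `v ∅ = 0`, every pure Nash
equilibrium price vector `p` of the pricing game satisfies
`p i ≥ v(N) - v(N \ {i})` for every seller `i`. -/
theorem stmt6 {n : ℕ} (v : Finset (Fin n) → ℝ)
    (hmono : ∀ S T : Finset (Fin n), S ⊆ T → v S ≤ v T)
    (hsub : ∀ S T : Finset (Fin n), v (S ∪ T) + v (S ∩ T) ≤ v S + v T)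
    (hv0 : v ∅ = 0)
    (X : (Fin n → ℝ) → Finset (Fin n))
    (hXd : ∀ q : Fin n → ℝ, (∀ i, 0 ≤ q i) → ∀ T : Finset (Fin n),
      v T - ∑ i ∈ T, q i ≤ v (X q) - ∑ i ∈ X q, q i)
    (p : Fin n → ℝ) (hp : ∀ i, 0 ≤ p i)
    (hnash : ∀ i : Fin n, ∀ q : ℝ, 0 ≤ q →
      (if i ∈ X (Function.update p i q) then q else 0) ≤
      (if i ∈ X p then p i else 0)) :
    ∀ i : Fin n, v Finset.univ - v (Finset.univ.erase i) ≤ p i := by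
  intro i
  by_contra h
  push_neg at h
  set m : ℝ := v Finset.univ - v (Finset.univ.erase i) with hm
  set q : ℝ := (p i + m) / 2 with hqdef
  have hpq : p i < q := by simp only [hqdef]; linarith
  have hqm : q < m := by simp only [hqdef]; linarith
  have hq0 : 0 ≤ q := le_of_lt (lt_of_le_of_lt (hp i) hpq)
  set P : Fin n → ℝ := Function.update p i q with hP
  have hP0 : ∀ j, 0 ≤ P j := by
    intro j
    by_cases hj : j = i
    · subst hj; simp [hP, hq0]
    · simp [hP, Function.update_of_ne hj, hp j]
  set A := X P with hA
  have hiA : i ∈ A := by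
    by_contra hiA
    -- marginal value of i given A is at least m
    have hunion : insert i A ∪ Finset.univ.erase i = Finset.univ := by
      ext j
      by_cases hj : j = i <;> simp [hj]
    have hinter : insert i A ∩ Finset.univ.erase i = A := by
      ext j
      by_cases hj : j = i
      · subst hj; simp [hiA]
      · simp [hj, Finset.mem_insert]
    have hmarg : m ≤ v (insert i A) - v A := by
      have := hsub (insert i A) (Finset.univ.erase i)
      rw [hunion, hinter] at this
      simp only [hm]; linarith
    have hsum : ∑ j ∈ insert i A, P j = q + ∑ j ∈ A, P j := by
      rw [Finset.sum_insert hiA]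
      simp [hP]
    have := hXd P hP0 (insert i A)
    rw [← hA, hsum] at this
    linarith
  have := hnash i q hq0
  rw [← hP, ← hA, if_pos hiA] at this
  by_cases hXp : i ∈ X p
  · rw [if_pos hXp] at this; linarith
  · rw [if_neg hXp] at this; have := hp i; linarith
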